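/- Fix b ∈ ℝ, ω > 0, and 𝓑 > 0. Let y ∈ ℝ² with y ≠ 0 and η ∈ ℝ². Then for every t ∈ ℝ with x^t(y,η) ≠ 0, the 2×2 complex matrix Z(t,y,η) := cos(ωt)·I + (sin(ωt)/ω)·A_x(x^t) − i𝓑·(sin(ωt)/ω)·I is invertible. -/

import Mathlib

/-- The Aharonov–Bohm vector potential with flux `b`:
`A(x) = (−b x₂/|x|², b x₁/|x|²)` for `x ∈ ℝ² \ {0}`. -/
noncomputable def A (b : ℝ) (x : ℝ × ℝ) : ℝ × ℝ :=
  (-b * x.2 / (x.1 ^ 2 + x.2 ^ 2), b * x.1 / (x.1 ^ 2 + x.2 ^ 2))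

/-- The wedge product `u ∧ v = u₁v₂ − u₂v₁` on `ℝ²`. -/
def wedge (u v : ℝ × ℝ) : ℝ := u.1 * v.2 - u.2 * v.1

/-- The Euclidean inner product on `ℝ²`. -/
def dot (u v : ℝ × ℝ) : ℝ := u.1 * v.1 + u.2 * v.2

/-- The squared Euclidean norm on `ℝ²`. -/
def normSq2 (u : ℝ × ℝ) : ℝ := u.1 ^ 2 + u.2 ^ 2

/-- The classical trajectory `x^t(y,η) = cos(ωt)·y + (sin(ωt)/ω)·(η − A(y))`. -/
noncomputable def traj (b ω : ℝ) (y η : ℝ × ℝ) (t : ℝ) : ℝ × ℝ :=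
  Real.cos (ω * t) • y + (Real.sin (ω * t) / ω) • (η - A b y)

/-- The Jacobian matrix of the Aharonov–Bohm potential `A` at `x ≠ 0`. -/
noncomputable def Amat (b : ℝ) (x : ℝ × ℝ) : Matrix (Fin 2) (Fin 2) ℝ :=
  (b / (normSq2 x) ^ 2) •
    !![2 * x.1 * x.2, x.2 ^ 2 - x.1 ^ 2; x.2 ^ 2 - x.1 ^ 2, -(2 * x.1 * x.2)]

/-- The Jacobian of the trajectory with respect to `η`, as a complex matrix:
`x^t_η = (sin(ωt)/ω)·I`. -/
noncomputable def xEta (ω : ℝ) (t : ℝ) : Matrix (Fin 2) (Fin 2) ℂ :=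
  ((Real.sin (ω * t) / ω : ℝ) : ℂ) • (1 : Matrix (Fin 2) (Fin 2) ℂ)

/-- The Jacobian of the momentum with respect to `η`, as a complex matrix:
`ξ^t_η = cos(ωt)·I + (sin(ωt)/ω)·A_x(x^t)`. -/
noncomputable def xiEta (b ω : ℝ) (y η : ℝ × ℝ) (t : ℝ) :
    Matrix (Fin 2) (Fin 2) ℂ :=
  ((Real.cos (ω * t) : ℝ) : ℂ) • (1 : Matrix (Fin 2) (Fin 2) ℂ) +
    ((Real.sin (ω * t) / ω : ℝ) : ℂ) •
      (Amat b (traj b ω y η t)).map (fun a => (a : ℂ))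

/-- The matrix `Z(t,y,η) = ξ^t_η − i𝓑·x^t_η
  = cos(ωt)·I + (sin(ωt)/ω)·A_x(x^t) − i𝓑·(sin(ωt)/ω)·I`. -/
noncomputable def Zmat (b ω 𝓑 : ℝ) (y η : ℝ × ℝ) (t : ℝ) :
    Matrix (Fin 2) (Fin 2) ℂ :=
  xiEta b ω y η t - (Complex.I * (𝓑 : ℂ)) • xEta ω t

private lemma factor_ne_zero {c s B : ℝ} (hB : 0 < B) (hs : s ≠ 0) (r : ℝ) :
    (c : ℂ) - Complex.I * B * s - r ≠ 0 := by
  intro H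
  have him := congrArg Complex.im H
  simp [Complex.sub_im, Complex.mul_im, Complex.mul_re] at him
  rcases him with h | h
  · exact hB.ne' h
  · exact hs h

private lemma key_ne_zero {c s d B : ℝ} (hB : 0 < B)
    (h0 : s = 0 → c ≠ 0 ∧ d = 0) :
    ((c : ℂ) - Complex.I * B * s) ^ 2 - (d : ℂ) ^ 2 ≠ 0 := by
  by_cases hs : s = 0
  · obtain ⟨hc, hd⟩ := h0 hs
    subst hs hd
    simpa using pow_ne_zero 2 (Complex.ofReal_ne_zero.mpr hc)
  · have h1 : (c : ℂ) - Complex.I * B * s - d ≠ 0 := factor_ne_zero hB hs d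
    have h2 : (c : ℂ) - Complex.I * B * s + d ≠ 0 := by
      have := factor_ne_zero hB hs (-d) (c := c) (B := B)
      push_cast at this
      simpa [sub_neg_eq_add] using this
    have : ((c : ℂ) - Complex.I * B * s) ^ 2 - (d : ℂ) ^ 2 =
        ((c : ℂ) - Complex.I * B * s - d) * ((c : ℂ) - Complex.I * B * s + d) := by
      ring
    rw [this]
    exact mul_ne_zero h1 h2

private lemma det_Zmat (b ω 𝓑 : ℝ) (y η : ℝ × ℝ) (t : ℝ)
    (hN : normSq2 (traj b ω y η t) ≠ 0) :
    (Zmat b ω 𝓑 y η t).det =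
      ((Real.cos (ω * t) : ℂ) - Complex.I * 𝓑 * ((Real.sin (ω * t) / ω : ℝ) : ℂ)) ^ 2
        - ((Real.sin (ω * t) / ω * b / normSq2 (traj b ω y η t) : ℝ) : ℂ) ^ 2 := by
  set x := traj b ω y η t with hx
  set s := Real.sin (ω * t) / ω with hs
  set c := Real.cos (ω * t) with hc
  set N := normSq2 x with hNdef
  have h2ℝ : (s * (b / N ^ 2)) ^ 2 * ((2 * x.1 * x.2) ^ 2 + (x.2 ^ 2 - x.1 ^ 2) ^ 2)
      = (s * b / N) ^ 2 := by
    have hN2 : N = x.1 ^ 2 + x.2 ^ 2 := rfl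
    field_simp
    rw [hN2]
    ring
  have h1 : (Zmat b ω 𝓑 y η t).det =
      ((c : ℂ) - Complex.I * 𝓑 * (s : ℂ)) ^ 2
        - ((s * (b / N ^ 2) : ℝ) : ℂ) ^ 2
          * (((2 * x.1 * x.2 : ℝ) : ℂ) ^ 2 + ((x.2 ^ 2 - x.1 ^ 2 : ℝ) : ℂ) ^ 2) := by
    simp only [Zmat, xiEta, xEta, Amat, ← hx, ← hNdef, ← hs, ← hc, Matrix.det_fin_two,
      Matrix.smul_apply, Matrix.add_apply, Matrix.sub_apply, Matrix.one_apply,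
      Matrix.map_apply, Matrix.cons_val', Matrix.cons_val_zero, Matrix.cons_val_one,
      Matrix.head_cons, Matrix.head_fin_const, Matrix.empty_val',
      Matrix.cons_val_fin_one, Matrix.of_apply, smul_eq_mul]
    push_cast
    ring
  rw [h1]
  have hC : ((s * (b / N ^ 2) : ℝ) : ℂ) ^ 2
      * (((2 * x.1 * x.2 : ℝ) : ℂ) ^ 2 + ((x.2 ^ 2 - x.1 ^ 2 : ℝ) : ℂ) ^ 2)
      = ((s * b / N : ℝ) : ℂ) ^ 2 := by
    exact_mod_cast congrArg (Complex.ofReal) h2ℝ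
  rw [hC]

/-- For `𝓑 > 0`, the matrix `Z(t,y,η)` is invertible whenever `x^t(y,η) ≠ 0`. -/
theorem Zmat_invertible (b ω 𝓑 : ℝ) (hω : 0 < ω) (h𝓑 : 0 < 𝓑)
    (y : ℝ × ℝ) (hy : y ≠ 0) (η : ℝ × ℝ) :
    ∀ t : ℝ, traj b ω y η t ≠ 0 → IsUnit (Zmat b ω 𝓑 y η t) := by
  intro t hxt
  have hN : normSq2 (traj b ω y η t) ≠ 0 := by
    intro h
    apply hxt
    have h1 : (traj b ω y η t).1 = 0 ∧ (traj b ω y η t).2 = 0 := by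
      have := h
      simp only [normSq2] at this
      constructor <;> nlinarith [sq_nonneg (traj b ω y η t).1, sq_nonneg (traj b ω y η t).2]
    exact Prod.ext h1.1 h1.2
  rw [Matrix.isUnit_iff_isUnit_det, isUnit_iff_ne_zero, det_Zmat b ω 𝓑 y η t hN]
  apply key_ne_zero h𝓑
  intro hs0
  have hsin : Real.sin (ω * t) = 0 := by
    field_simp at hs0
    simpa using hs0
  constructor
  · have := Real.sin_sq_add_cos_sq (ω * t)
    rw [hsin] at this
    intro hc0
    rw [hc0] at this
    norm_num at this
  · rw [hsin]; simp
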